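/- arXiv:2507.03856 — 5 statements merged into one kernel-verified Lean document; each statement's English description precedes it below -/
import Mathlib

section
/- Let B be a real matrix with columns b_1, ..., b_n each of unit Euclidean norm, and let μ(B) = max_{i≠j} |b_i^T b_j| be its mutual coherence. Suppose c = B q_* where q_* ∈ ℝ^n satisfies ‖q_*‖_0 < (1/2)(1 + 1/μ(B)), where ‖·‖_0 counts the number of nonzero entries. Then q_* is the unique solution of the problem: minimize ‖q‖_0 subject to B q = c; that is, every q ∈ ℝ^n with B q = c and q ≠ q_* satisfies ‖q‖_0 > ‖q_*‖_0. -/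
/-- Mutual coherence of a matrix `B` (whose columns are assumed unit-norm):
the supremum of `|b_i^T b_j|` over pairs of distinct columns. -/
noncomputable def mutualCoherence {d n : ℕ} (B : Matrix (Fin d) (Fin n) ℝ) : ℝ :=
  sSup {x : ℝ | ∃ i j : Fin n, i ≠ j ∧ x = |∑ k, B k i * B k j|}

/-- `‖q‖₀`: the number of nonzero entries of `q`. -/
noncomputable def l0norm {n : ℕ} (q : Fin n → ℝ) : ℕ :=
  (Finset.univ.filter fun i => q i ≠ 0).card

lemma coherence_ge {d n : ℕ} (B : Matrix (Fin d) (Fin n) ℝ)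
    (hunit : ∀ j : Fin n, ∑ k, (B k j) ^ 2 = 1) {i j : Fin n} (hij : i ≠ j) :
    |∑ k, B k i * B k j| ≤ mutualCoherence B := by
  apply le_csSup
  · refine ⟨1, ?_⟩
    rintro x ⟨a, b, hab, rfl⟩
    have := Finset.sum_mul_sq_le_sq_mul_sq Finset.univ (fun k => B k a) (fun k => B k b)
    rw [hunit a, hunit b] at this
    have h1 : (∑ k, B k a * B k b) ^ 2 ≤ 1 := by simpa using this
    nlinarith [abs_nonneg (∑ k, B k a * B k b), sq_abs (∑ k, B k a * B k b)]
  · exact ⟨i, j, hij, rfl⟩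

theorem l0_unique_recovery {d n : ℕ} (B : Matrix (Fin d) (Fin n) ℝ)
    (hunit : ∀ j : Fin n, ∑ k, (B k j) ^ 2 = 1)
    (qstar : Fin n → ℝ)
    (hsparse : (l0norm qstar : ℝ) < (1 / 2) * (1 + 1 / mutualCoherence B)) :
    ∀ q : Fin n → ℝ, B.mulVec q = B.mulVec qstar → q ≠ qstar →
      l0norm qstar < l0norm q := by
  intro q hq hne
  set μ := mutualCoherence B with hμdef
  -- Case: qstar has no nonzero entry
  by_cases h0 : l0norm qstar = 0
  · have hq0 : qstar = 0 := by
      funext i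
      by_contra hi
      simp only [Pi.zero_apply] at hi
      have hmem : i ∈ Finset.univ.filter fun j => qstar j ≠ 0 := by simp [hi]
      have hpos := Finset.card_pos.mpr ⟨i, hmem⟩
      unfold l0norm at h0
      omega
    rw [h0]
    have hqne : q ≠ 0 := by rw [hq0] at hne; exact hne
    obtain ⟨i, hi⟩ := Function.ne_iff.mp hqne
    simp only [Pi.zero_apply] at hi
    have : i ∈ Finset.univ.filter fun j => q j ≠ 0 := by simp [hi]
    exact Finset.card_pos.mpr ⟨i, this⟩
  · -- main case
    have hq1 : 1 ≤ l0norm qstar := Nat.one_le_iff_ne_zero.mpr h0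
    have hq1' : (1:ℝ) ≤ (l0norm qstar : ℝ) := by exact_mod_cast hq1
    have hinv : 1 < 1/μ := by nlinarith
    have hμpos : 0 < μ := by
      by_contra hc
      push_neg at hc
      have : 1/μ ≤ 0 := one_div_nonpos.mpr hc
      linarith
    -- the difference vector
    set h : Fin n → ℝ := q - qstar with hhdef
    have hBh : B.mulVec h = 0 := by
      rw [hhdef, Matrix.mulVec_sub, hq, sub_self]
    have hhne : h ≠ 0 := by
      rw [hhdef]; exact sub_ne_zero.mpr hne
    set G : Fin n → Fin n → ℝ := fun i j => ∑ k, B k i * B k j with hGdef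
    -- expand ‖Bh‖²
    have expand : ∑ k, (B.mulVec h k)^2 = ∑ i, ∑ j, h i * h j * G i j := by
      have e1 : ∀ k, (B.mulVec h k)^2 = ∑ i, ∑ j, (B k i * h i) * (B k j * h j) := by
        intro k
        have : B.mulVec h k = ∑ i, B k i * h i := rfl
        rw [this, sq, Finset.sum_mul_sum]
      rw [Finset.sum_congr rfl (fun k _ => e1 k)]
      rw [Finset.sum_comm]
      refine Finset.sum_congr rfl fun i _ => ?_
      rw [Finset.sum_comm]
      refine Finset.sum_congr rfl fun j _ => ?_
      rw [hGdef, Finset.mul_sum]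
      exact Finset.sum_congr rfl fun k _ => by ring
    have hzero : ∑ i, ∑ j, h i * h j * G i j = 0 := by
      rw [← expand, hBh]; simp
    -- key inequality
    set T : ℝ := ∑ i, |h i| with hTdef
    have habs : ∀ i j : Fin n, i ≠ j → -(μ * (|h i| * |h j|)) ≤ h i * h j * G i j := by
      intro i j hij
      have h1 : |h i * h j * G i j| ≤ μ * (|h i| * |h j|) := by
        rw [abs_mul, abs_mul]
        have hcg := coherence_ge B hunit hij
        have hnn : 0 ≤ |h i| * |h j| := by positivity
        calc |h i| * |h j| * |G i j| ≤ |h i| * |h j| * μ :=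
              mul_le_mul_of_nonneg_left hcg hnn
          _ = μ * (|h i| * |h j|) := by ring
      linarith [neg_abs_le (h i * h j * G i j)]
    have hsplit : ∀ i : Fin n,
        h i ^ 2 - μ * ∑ j ∈ Finset.univ.erase i, |h i| * |h j|
          ≤ ∑ j, h i * h j * G i j := by
      intro i
      rw [← Finset.add_sum_erase Finset.univ _ (Finset.mem_univ i)]
      have hGii : G i i = 1 := by
        rw [hGdef]
        simpa [sq] using hunit i
      rw [hGii]
      have hle : ∑ j ∈ Finset.univ.erase i, -(μ * (|h i| * |h j|)) ≤
          ∑ j ∈ Finset.univ.erase i, h i * h j * G i j := by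
        apply Finset.sum_le_sum
        intro j hj
        exact habs i j (Ne.symm (Finset.mem_erase.mp hj).1)
      rw [Finset.sum_neg_distrib, ← Finset.mul_sum] at hle
      nlinarith [hle]
    have hsum2 : ∑ i, (h i ^ 2 - μ * ∑ j ∈ Finset.univ.erase i, |h i| * |h j|) ≤ 0 := by
      rw [← hzero]
      exact Finset.sum_le_sum fun i _ => hsplit i
    have herase : ∀ i : Fin n, ∑ j ∈ Finset.univ.erase i, |h i| * |h j|
        = |h i| * T - h i ^ 2 := by
      intro i
      have h1 := Finset.add_sum_erase Finset.univ (fun j => |h i| * |h j|) (Finset.mem_univ i)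
      have h2 : ∑ j, |h i| * |h j| = |h i| * T := by rw [hTdef, Finset.mul_sum]
      have habs2 : |h i| * |h i| = h i ^ 2 := by
        rw [← abs_mul, ← sq, abs_of_nonneg (sq_nonneg _)]
      linarith
    have key : (1 + μ) * ∑ i, h i ^ 2 ≤ μ * T ^ 2 := by
      have h1 : ∑ i, (h i ^ 2 - μ * (|h i| * T - h i ^ 2)) ≤ 0 := by
        calc ∑ i, (h i ^ 2 - μ * (|h i| * T - h i ^ 2))
            = ∑ i, (h i ^ 2 - μ * ∑ j ∈ Finset.univ.erase i, |h i| * |h j|) :=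
              Finset.sum_congr rfl fun i _ => by rw [herase i]
          _ ≤ 0 := hsum2
      have hT : ∑ i, |h i| * T = T ^ 2 := by
        rw [← Finset.sum_mul, ← hTdef, sq]
      have hexp : ∑ i, (h i ^ 2 - μ * (|h i| * T - h i ^ 2))
          = (1 + μ) * (∑ i, h i ^ 2) - μ * ∑ i, |h i| * T := by
        rw [Finset.sum_sub_distrib, ← Finset.mul_sum, Finset.sum_sub_distrib]
        ring
      rw [hexp, hT] at h1
      linarith
    -- Cauchy–Schwarz on the support
    set S : Finset (Fin n) := Finset.univ.filter fun i => h i ≠ 0 with hSdef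
    have hTS : T = ∑ i ∈ S, |h i| := by
      rw [hTdef, hSdef]
      symm
      apply Finset.sum_subset (Finset.subset_univ _)
      intro i _ hi
      simp only [Finset.mem_filter, Finset.mem_univ, true_and, not_not] at hi
      simp [hi]
    have hCS : T ^ 2 ≤ (S.card : ℝ) * ∑ i, h i ^ 2 := by
      have h1 := Finset.sum_mul_sq_le_sq_mul_sq S (fun _ => (1:ℝ)) (fun i => |h i|)
      simp only [one_mul, one_pow] at h1
      have h2 : ∑ _i ∈ S, (1:ℝ) = (S.card : ℝ) := by simp
      have h3 : ∑ i ∈ S, |h i| ^ 2 ≤ ∑ i, h i ^ 2 := by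
        have he : ∑ i ∈ S, |h i| ^ 2 = ∑ i ∈ S, h i ^ 2 :=
          Finset.sum_congr rfl fun i _ => sq_abs _
        rw [he]
        exact Finset.sum_le_sum_of_subset_of_nonneg (Finset.subset_univ _)
          (fun i _ _ => sq_nonneg _)
      have hcard : (0:ℝ) ≤ (S.card : ℝ) := Nat.cast_nonneg _
      calc T ^ 2 = (∑ i ∈ S, |h i|) ^ 2 := by rw [hTS]
        _ ≤ (S.card : ℝ) * ∑ i ∈ S, |h i| ^ 2 := by rw [← h2]; exact h1
        _ ≤ (S.card : ℝ) * ∑ i, h i ^ 2 := mul_le_mul_of_nonneg_left h3 hcard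
    have hh2pos : 0 < ∑ i, h i ^ 2 := by
      obtain ⟨i, hi⟩ := Function.ne_iff.mp hhne
      simp only [Pi.zero_apply] at hi
      exact Finset.sum_pos' (fun j _ => sq_nonneg _)
        ⟨i, Finset.mem_univ i, by positivity⟩
    have hscard : (1:ℝ) + 1/μ ≤ (S.card : ℝ) := by
      have h4 : (1+μ) * ∑ i, h i ^ 2 ≤ μ * ((S.card:ℝ) * ∑ i, h i ^ 2) :=
        key.trans (mul_le_mul_of_nonneg_left hCS hμpos.le)
      have h5 : 1 + μ ≤ μ * (S.card : ℝ) := by nlinarith [h4, hh2pos]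
      have h6 : μ * (1 + 1/μ) = 1 + μ := by field_simp; ring
      nlinarith [h5, h6, hμpos]
    have hsupp : S.card ≤ l0norm q + l0norm qstar := by
      unfold l0norm
      calc S.card ≤ ((Finset.univ.filter fun i => q i ≠ 0)
            ∪ (Finset.univ.filter fun i => qstar i ≠ 0)).card := by
            apply Finset.card_le_card
            intro i hi
            simp only [hSdef, hhdef, Finset.mem_filter, Finset.mem_union, Finset.mem_univ,
              true_and, Pi.sub_apply] at hi ⊢
            by_contra hc
            push_neg at hc
            obtain ⟨h1, h2⟩ := hc
            apply hi
            rw [h1, h2]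
            ring
        _ ≤ _ := Finset.card_union_le _ _
    have hfin : (l0norm qstar : ℝ) < (l0norm q : ℝ) := by
      have h2s : 2 * (l0norm qstar : ℝ) < 1 + 1/μ := by linarith
      have hcast : (S.card : ℝ) ≤ (l0norm q : ℝ) + (l0norm qstar : ℝ) := by
        exact_mod_cast hsupp
      linarith
    exact_mod_cast hfin
end

section
/- Let B be a real matrix with columns b_1, ..., b_n each of unit Euclidean norm, and let μ(B) = max_{i≠j} |b_i^T b_j| be its mutual coherence. Suppose c = B q_* where q_* ∈ ℝ^n satisfies ‖q_*‖_0 < (1/2)(1 + 1/μ(B)). Then q_* is the unique solution of the convex problem: minimize ‖q‖_1 subject to B q = c; that is, every q ∈ ℝ^n with B q = c and q ≠ q_* satisfies ‖q‖_1 > ‖q_*‖_1. -/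
theorem l1_unique_recovery {d n : ℕ} (B : Matrix (Fin d) (Fin n) ℝ)
    (hunit : ∀ j : Fin n, ∑ k, (B k j) ^ 2 = 1)
    (qstar : Fin n → ℝ)
    (hsparse : (l0norm qstar : ℝ) < (1 / 2) * (1 + 1 / mutualCoherence B)) :
    ∀ q : Fin n → ℝ, B.mulVec q = B.mulVec qstar → q ≠ qstar →
      ∑ i, |qstar i| < ∑ i, |q i| := by
  intro q hq hne
  set μ := mutualCoherence B with hμdef
  set h : Fin n → ℝ := q - qstar with hhdef
  have hne' : h ≠ 0 := sub_ne_zero.mpr hne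
  have hnull : B.mulVec h = 0 := by
    rw [hhdef, Matrix.mulVec_sub, hq, sub_self]
  -- boundedness of the coherence set
  have hfin : ({x : ℝ | ∃ i j : Fin n, i ≠ j ∧ x = |∑ k, B k i * B k j|}).Finite := by
    apply Set.Finite.subset
      (Set.finite_range (fun p : Fin n × Fin n => |∑ k, B k p.1 * B k p.2|))
    rintro x ⟨i, j, _, rfl⟩
    exact ⟨(i, j), rfl⟩
  have hG : ∀ i j : Fin n, i ≠ j → |∑ k, B k i * B k j| ≤ μ := by
    intro i j hij
    exact le_csSup hfin.bddAbove ⟨i, j, hij, rfl⟩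
  -- key inequality from B h = 0
  have key : ∀ i, |h i| ≤ μ * (∑ j, |h j| - |h i|) := by
    intro i
    have e0 : ∑ j, (∑ k, B k i * B k j) * h j = 0 := by
      have hz : ∑ k, B k i * (B.mulVec h k) = 0 := by
        simp [hnull]
      calc ∑ j, (∑ k, B k i * B k j) * h j
          = ∑ j, ∑ k, B k i * (B k j * h j) := by
            simp [Finset.sum_mul, mul_assoc]
        _ = ∑ k, ∑ j, B k i * (B k j * h j) := Finset.sum_comm
        _ = ∑ k, B k i * (B.mulVec h k) := by
            simp [Matrix.mulVec, dotProduct, Finset.mul_sum]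
        _ = 0 := hz
    have ediag : (∑ k, B k i * B k i) = 1 := by
      simpa [sq] using hunit i
    have e1 : h i = -∑ j ∈ Finset.univ.erase i, (∑ k, B k i * B k j) * h j := by
      have e2 := Finset.add_sum_erase Finset.univ
        (fun j => (∑ k, B k i * B k j) * h j) (Finset.mem_univ i)
      rw [e0] at e2
      simp only [ediag, one_mul] at e2
      linarith
    have e3 : |h i| ≤ ∑ j ∈ Finset.univ.erase i, μ * |h j| := by
      rw [e1, abs_neg]
      refine le_trans (Finset.abs_sum_le_sum_abs _ _) (Finset.sum_le_sum ?_)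
      intro j hj
      rw [abs_mul]
      exact mul_le_mul_of_nonneg_right (hG i j (Finset.ne_of_mem_erase hj).symm)
        (abs_nonneg _)
    calc |h i| ≤ ∑ j ∈ Finset.univ.erase i, μ * |h j| := e3
      _ = μ * ∑ j ∈ Finset.univ.erase i, |h j| := by rw [Finset.mul_sum]
      _ = μ * (∑ j, |h j| - |h i|) := by
          rw [Finset.sum_erase_eq_sub (Finset.mem_univ i)]
  have habs : ∀ i, |h i| ≤ ∑ j, |h j| := by
    intro i
    exact Finset.single_le_sum (fun j _ => abs_nonneg (h j)) (Finset.mem_univ i)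
  rcases le_or_gt μ 0 with hμ0 | hμpos
  · -- then h = 0, contradiction
    exfalso
    apply hne'
    funext i
    have h1 : μ * (∑ j, |h j| - |h i|) ≤ 0 :=
      mul_nonpos_of_nonpos_of_nonneg hμ0 (by linarith [habs i])
    have : |h i| ≤ 0 := le_trans (key i) h1
    exact abs_eq_zero.mp (le_antisymm this (abs_nonneg _))
  · -- main case μ > 0
    set S := Finset.univ.filter (fun i => qstar i ≠ 0) with hSdef
    have hk : (S.card : ℝ) < (1 / 2) * (1 + 1 / μ) := hsparse
    have hT : (0 : ℝ) < ∑ j, |h j| := by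
      obtain ⟨i, hi⟩ := Function.ne_iff.mp hne'
      exact Finset.sum_pos' (fun j _ => abs_nonneg _)
        ⟨i, Finset.mem_univ i, abs_pos.mpr hi⟩
    have key2 : ∀ i, (1 + μ) * |h i| ≤ μ * ∑ j, |h j| := by
      intro i
      have := key i
      rw [mul_sub] at this
      linarith
    have hS : ∑ i ∈ S, |h i| < (1 / 2) * ∑ j, |h j| := by
      have h1 : (1 + μ) * ∑ i ∈ S, |h i| ≤ (S.card : ℝ) * (μ * ∑ j, |h j|) := by
        rw [Finset.mul_sum]
        have := Finset.sum_le_card_nsmul S (fun i => (1 + μ) * |h i|)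
          (μ * ∑ j, |h j|) (fun i _ => key2 i)
        simpa [nsmul_eq_mul] using this
      have h2 : (S.card : ℝ) * (μ * ∑ j, |h j|) <
          (1 / 2) * (1 + 1 / μ) * (μ * ∑ j, |h j|) :=
        mul_lt_mul_of_pos_right hk (mul_pos hμpos hT)
      have h3 : (1 / 2) * (1 + 1 / μ) * (μ * ∑ j, |h j|) =
          (1 + μ) * ((1 / 2) * ∑ j, |h j|) := by
        field_simp
        ring
      have h4 : (1 + μ) * ∑ i ∈ S, |h i| < (1 + μ) * ((1 / 2) * ∑ j, |h j|) := by
        calc (1 + μ) * ∑ i ∈ S, |h i| ≤ (S.card : ℝ) * (μ * ∑ j, |h j|) := h1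
          _ < (1 / 2) * (1 + 1 / μ) * (μ * ∑ j, |h j|) := h2
          _ = (1 + μ) * ((1 / 2) * ∑ j, |h j|) := h3
      exact lt_of_mul_lt_mul_left h4 (by linarith)
    -- assemble final inequality
    have hqi : ∀ i, q i = qstar i + h i := by
      intro i; simp [hhdef]
    have hsplit : ∑ i, |q i| =
        ∑ i ∈ S, |q i| + ∑ i ∈ Finset.univ.filter (fun i => ¬ qstar i ≠ 0), |q i| :=
      (Finset.sum_filter_add_sum_filter_not Finset.univ _ _).symm
    have hoffS : ∑ i ∈ Finset.univ.filter (fun i => ¬ qstar i ≠ 0), |q i| =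
        ∑ j, |h j| - ∑ i ∈ S, |h i| := by
      have e1 : ∑ i ∈ Finset.univ.filter (fun i => ¬ qstar i ≠ 0), |q i| =
          ∑ i ∈ Finset.univ.filter (fun i => ¬ qstar i ≠ 0), |h i| := by
        refine Finset.sum_congr rfl ?_
        intro i hi
        simp only [Finset.mem_filter, not_not] at hi
        rw [hqi i, hi.2, zero_add]
      rw [e1]
      have := Finset.sum_filter_add_sum_filter_not Finset.univ
        (fun i => qstar i ≠ 0) (fun i => |h i|)
      linarith
    have honS : ∑ i ∈ S, |qstar i| - ∑ i ∈ S, |h i| ≤ ∑ i ∈ S, |q i| := by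
      rw [← Finset.sum_sub_distrib]
      refine Finset.sum_le_sum ?_
      intro i _
      have : |qstar i| ≤ |q i| + |h i| := by
        calc |qstar i| = |q i - h i| := by rw [hqi i]; ring_nf
          _ ≤ |q i| + |h i| := abs_sub _ _
      linarith
    have hSfull : ∑ i ∈ S, |qstar i| = ∑ i, |qstar i| := by
      refine Finset.sum_subset (Finset.filter_subset _ _) ?_
      intro i _ hi
      simp only [hSdef, Finset.mem_filter, Finset.mem_univ, true_and, not_not] at hi
      simp [hi]
    rw [hsplit, hoffS]
    rw [hSfull] at honS
    linarith
end

section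
/- Let s ≤ t be positive integers. A matrix G_* ∈ ℝ^{s×t} of full row rank s minimizes the objective F(G) = (1/2)‖G^T G − I_t‖_F² over all matrices G ∈ ℝ^{s×t} of full row rank if and only if G_* = U V^T for some orthogonal matrix U ∈ ℝ^{s×s} and some matrix V ∈ ℝ^{t×s} with orthonormal columns. -/
open Matrix

/-- The objective `F(G) = (1/2) ‖Gᵀ G − I‖_F²`. -/
noncomputable def frobObjective {s t : ℕ} (G : Matrix (Fin s) (Fin t) ℝ) : ℝ :=
  (1 / 2) * ∑ i : Fin t, ∑ j : Fin t, ((Gᵀ * G - 1 : Matrix (Fin t) (Fin t) ℝ) i j) ^ 2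

lemma frob_eq_trace {s t : ℕ} (G : Matrix (Fin s) (Fin t) ℝ) :
    frobObjective G = (1/2) * Matrix.trace ((Gᵀ * G - 1) * (Gᵀ * G - 1)) := by
  have hsymm : (Gᵀ * G - 1 : Matrix (Fin t) (Fin t) ℝ)ᵀ = Gᵀ * G - 1 := by
    simp [transpose_sub, transpose_mul]
  unfold frobObjective
  congr 1
  rw [Matrix.trace]
  simp only [Matrix.diag, Matrix.mul_apply]
  rw [Finset.sum_comm]
  apply Finset.sum_congr rfl
  intro i _
  apply Finset.sum_congr rfl
  intro j _
  rw [sq]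
  congr 1
  exact congrFun (congrFun hsymm i) j

lemma trace_sub_one_sq {t : ℕ} (A : Matrix (Fin t) (Fin t) ℝ) (hA : A.IsHermitian) :
    Matrix.trace ((A - 1) * (A - 1)) = ∑ i, (hA.eigenvalues i - 1)^2 := by
  classical
  set U : Matrix (Fin t) (Fin t) ℝ :=
    (IsHermitian.eigenvectorUnitary hA : Matrix (Fin t) (Fin t) ℝ) with hU
  set D : Matrix (Fin t) (Fin t) ℝ := diagonal (RCLike.ofReal ∘ hA.eigenvalues) with hD
  have hUU : U * star U = 1 :=
    (Matrix.mem_unitaryGroup_iff).mp (IsHermitian.eigenvectorUnitary hA).2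
  have hUU' : star U * U = 1 := Unitary.coe_star_mul_self (IsHermitian.eigenvectorUnitary hA)
  have h1 : A - 1 = U * (D - 1) * star U := by
    rw [hA.spectral_theorem, Unitary.conjStarAlgAut_apply]
    rw [Matrix.mul_sub, Matrix.sub_mul, Matrix.mul_one, hUU]
  have h2 : (A - 1) * (A - 1) = U * ((D - 1) * (D - 1)) * star U := by
    rw [h1]
    simp only [Matrix.mul_assoc]
    rw [← Matrix.mul_assoc (star U) U, hUU', Matrix.one_mul]
  rw [h2, Matrix.trace_mul_cycle, ← Matrix.mul_assoc, hUU', Matrix.one_mul]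
  have h3 : (D - 1 : Matrix (Fin t) (Fin t) ℝ) = diagonal (fun i => hA.eigenvalues i - 1) := by
    rw [hD, ← diagonal_one, diagonal_sub]
    simp [RCLike.ofReal_real_eq_id]
  rw [h3, diagonal_mul_diagonal, Matrix.trace_diagonal]
  exact Finset.sum_congr rfl fun i _ => (sq _).symm

lemma frob_of_orth {s t : ℕ} (G : Matrix (Fin s) (Fin t) ℝ) (h : G * Gᵀ = 1) :
    frobObjective G = ((t : ℝ) - s) / 2 := by
  have hAA : (Gᵀ * G) * (Gᵀ * G) = Gᵀ * G := by
    calc (Gᵀ * G) * (Gᵀ * G) = Gᵀ * (G * Gᵀ) * G := by simp only [Matrix.mul_assoc]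
    _ = Gᵀ * G := by rw [h, Matrix.mul_one]
  have hM : (Gᵀ * G - 1) * (Gᵀ * G - 1) = 1 - Gᵀ * G := by
    rw [Matrix.sub_mul, Matrix.mul_sub, Matrix.mul_sub, hAA, Matrix.mul_one, Matrix.one_mul,
      mul_one]
    abel
  rw [frob_eq_trace, hM, Matrix.trace_sub, Matrix.trace_one, Matrix.trace_mul_comm, h,
    Matrix.trace_one]
  simp
  ring

lemma isUnit_of_rank_eq {n : ℕ} (C : Matrix (Fin n) (Fin n) ℝ) (h : C.rank = n) : IsUnit C := by
  rw [← Matrix.mulVec_injective_iff_isUnit]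
  have hsurj : Function.Surjective C.mulVecLin := by
    rw [← LinearMap.range_eq_top]
    apply Submodule.eq_top_of_finrank_eq
    rw [← Matrix.rank, h, Module.finrank_pi]
    simp
  exact LinearMap.injective_iff_surjective.mpr hsurj

lemma isHermitian_tmul {s t : ℕ} (G : Matrix (Fin s) (Fin t) ℝ) : (Gᵀ * G).IsHermitian :=
  Matrix.conjTranspose_eq_transpose_of_trivial G ▸ Matrix.isHermitian_conjTranspose_mul_self G

lemma frob_decomp {s t : ℕ} (hst : s ≤ t) (G : Matrix (Fin s) (Fin t) ℝ) (hG : G.rank = s) :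
    frobObjective G = (1/2) * (((t : ℝ) - s) +
      ∑ i ∈ Finset.univ.filter (fun i => ¬ (isHermitian_tmul G).eigenvalues i = 0),
        ((isHermitian_tmul G).eigenvalues i - 1)^2) := by
  classical
  set hA := isHermitian_tmul G
  have hrank : (Gᵀ * G).rank = s := by rw [Matrix.rank_transpose_mul_self, hG]
  have hcard : (Finset.univ.filter (fun i => ¬ hA.eigenvalues i = 0)).card = s := by
    have h1 := hA.rank_eq_card_non_zero_eigs
    rw [hrank, Fintype.card_subtype] at h1
    exact h1.symm
  have hcard0 : (Finset.univ.filter (fun i => hA.eigenvalues i = 0)).card = t - s := by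
    have h2 := Finset.card_filter_add_card_filter_not (s := (Finset.univ : Finset (Fin t)))
      (p := fun i => hA.eigenvalues i = 0)
    rw [hcard, Finset.card_univ, Fintype.card_fin] at h2
    omega
  rw [frob_eq_trace, trace_sub_one_sq _ hA]
  rw [← Finset.sum_filter_add_sum_filter_not Finset.univ (fun i => hA.eigenvalues i = 0)]
  congr 2
  have : ∀ i ∈ Finset.univ.filter (fun i => hA.eigenvalues i = 0),
      (hA.eigenvalues i - 1)^2 = 1 := by
    intro i hi
    rw [Finset.mem_filter] at hi
    rw [hi.2]
    norm_num
  rw [Finset.sum_congr rfl this, Finset.sum_const, hcard0, nsmul_eq_mul, mul_one,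
    Nat.cast_sub hst]

lemma proj_of_eig {t : ℕ} (A : Matrix (Fin t) (Fin t) ℝ) (hA : A.IsHermitian)
    (h : ∀ i, hA.eigenvalues i = 0 ∨ hA.eigenvalues i = 1) : A * A = A := by
  classical
  set U : Matrix (Fin t) (Fin t) ℝ :=
    (IsHermitian.eigenvectorUnitary hA : Matrix (Fin t) (Fin t) ℝ) with hU
  set D : Matrix (Fin t) (Fin t) ℝ := diagonal (RCLike.ofReal ∘ hA.eigenvalues) with hD
  have hUU' : star U * U = 1 := Unitary.coe_star_mul_self (IsHermitian.eigenvectorUnitary hA)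
  have hDD : D * D = D := by
    rw [hD, diagonal_mul_diagonal]
    refine congrArg diagonal ?_
    funext i
    simp only [Pi.mul_apply, Function.comp_apply, RCLike.ofReal_real_eq_id, id_eq]
    rcases h i with h0 | h1
    · rw [h0]; ring
    · rw [h1]; ring
  rw [hA.spectral_theorem, Unitary.conjStarAlgAut_apply]
  simp only [Matrix.mul_assoc]
  rw [← Matrix.mul_assoc (star U) U, hUU', Matrix.one_mul, ← Matrix.mul_assoc D D, hDD]

lemma exists_orth {s t : ℕ} (hst : s ≤ t) :
    ∃ G : Matrix (Fin s) (Fin t) ℝ, G * Gᵀ = 1 := by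
  refine ⟨(1 : Matrix (Fin t) (Fin t) ℝ).submatrix (Fin.castLE hst) id, ?_⟩
  rw [transpose_submatrix, transpose_one]
  rw [show (id : Fin t → Fin t) = ⇑(Equiv.refl (Fin t)) from rfl, Matrix.submatrix_mul_equiv,
    Matrix.one_mul]
  ext i j
  simp [Matrix.submatrix_apply, Matrix.one_apply, Fin.castLE_inj]

theorem coherence_minimizer_characterization {s t : ℕ} (hs : 0 < s) (hst : s ≤ t)
    (Gstar : Matrix (Fin s) (Fin t) ℝ) (hGstar : Gstar.rank = s) :
    (∀ G : Matrix (Fin s) (Fin t) ℝ, G.rank = s → frobObjective Gstar ≤ frobObjective G)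
      ↔
    ∃ (U : Matrix (Fin s) (Fin s) ℝ) (V : Matrix (Fin t) (Fin s) ℝ),
      Uᵀ * U = 1 ∧ Vᵀ * V = 1 ∧ Gstar = U * Vᵀ := by
  classical
  constructor
  · intro hmin
    obtain ⟨G₀, hG₀⟩ := exists_orth hst
    have hG₀rank : G₀.rank = s := by
      have h := Matrix.rank_self_mul_transpose G₀
      rw [hG₀, Matrix.rank_one, Fintype.card_fin] at h
      exact h.symm
    have hle : frobObjective Gstar ≤ ((t : ℝ) - s) / 2 := by
      rw [← frob_of_orth G₀ hG₀]; exact hmin G₀ hG₀rank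
    set hA := isHermitian_tmul Gstar with hA_def
    have hdec := frob_decomp hst Gstar hGstar
    rw [hdec] at hle
    have hRnn : 0 ≤ ∑ i ∈ Finset.univ.filter (fun i => ¬ hA.eigenvalues i = 0),
        (hA.eigenvalues i - 1)^2 :=
      Finset.sum_nonneg fun i _ => sq_nonneg _
    have hR0 : ∑ i ∈ Finset.univ.filter (fun i => ¬ hA.eigenvalues i = 0),
        (hA.eigenvalues i - 1)^2 = 0 := by
      rw [← hA_def] at hle
      nlinarith [hle, hRnn]
    have heig : ∀ i, hA.eigenvalues i = 0 ∨ hA.eigenvalues i = 1 := by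
      intro i
      by_cases h0 : hA.eigenvalues i = 0
      · exact Or.inl h0
      · right
        have hi : i ∈ Finset.univ.filter (fun i => ¬ hA.eigenvalues i = 0) := by
          simp [h0]
        have := (Finset.sum_eq_zero_iff_of_nonneg (fun i _ => sq_nonneg
          (hA.eigenvalues i - 1))).mp hR0 i hi
        have := pow_eq_zero_iff (n := 2) (by norm_num) |>.mp this
        linarith [sub_eq_zero.mp this]
    have hAA : (Gstarᵀ * Gstar) * (Gstarᵀ * Gstar) = Gstarᵀ * Gstar :=
      proj_of_eig _ hA heig
    set C := Gstar * Gstarᵀ with hC_def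
    have hCrank : C.rank = s := by
      rw [hC_def, Matrix.rank_self_mul_transpose, hGstar]
    have hC : IsUnit C := isUnit_of_rank_eq C hCrank
    have hCCC : C * C * C = C * C := by
      have h1 : C * C * C = Gstar * ((Gstarᵀ * Gstar) * (Gstarᵀ * Gstar)) * Gstarᵀ := by
        rw [hC_def]; simp only [Matrix.mul_assoc]
      have h2 : C * C = Gstar * (Gstarᵀ * Gstar) * Gstarᵀ := by
        rw [hC_def]; simp only [Matrix.mul_assoc]
      rw [h1, hAA, ← h2]
    have hCone : C = 1 := by
      apply (hC.mul hC).mul_left_cancel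
      rw [mul_one]
      exact hCCC
    refine ⟨1, Gstarᵀ, by simp, ?_, by simp⟩
    rw [transpose_transpose]
    exact hCone
  · rintro ⟨U, V, hU, hV, rfl⟩ G hGrank
    have hUUt : U * Uᵀ = 1 := mul_eq_one_comm.mp hU
    have hGG : (U * Vᵀ) * (U * Vᵀ)ᵀ = 1 := by
      rw [transpose_mul, transpose_transpose]
      calc U * Vᵀ * (V * Uᵀ) = U * (Vᵀ * V) * Uᵀ := by simp only [Matrix.mul_assoc]
      _ = 1 := by rw [hV, Matrix.mul_one, hUUt]
    rw [frob_of_orth _ hGG, frob_decomp hst G hGrank]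
    have hRnn : 0 ≤ ∑ i ∈ Finset.univ.filter
        (fun i => ¬ (isHermitian_tmul G).eigenvalues i = 0),
        ((isHermitian_tmul G).eigenvalues i - 1)^2 :=
      Finset.sum_nonneg fun i _ => sq_nonneg _
    linarith
end

section
/- Let s ≤ t be positive integers. For every matrix G ∈ ℝ^{s×t}, one has ‖G^T G − I_t‖_F² ≥ t − s. -/
open Matrix

theorem frobenius_lower_bound {s t : ℕ} (hs : 0 < s) (hst : s ≤ t)
    (G : Matrix (Fin s) (Fin t) ℝ) :
    (t : ℝ) - s ≤ ∑ i : Fin t, ∑ j : Fin t, ((Gᵀ * G - 1 : Matrix (Fin t) (Fin t) ℝ) i j) ^ 2 := by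
  set A : Fin t → Fin t → ℝ := fun i j => ∑ k, G k i * G k j with hA
  set B : Fin s → Fin s → ℝ := fun k l => ∑ i, G k i * G l i with hB
  have entry : ∀ i j, (Gᵀ * G - 1 : Matrix (Fin t) (Fin t) ℝ) i j
      = A i j - (if i = j then 1 else 0) := by
    intro i j
    simp [Matrix.sub_apply, Matrix.mul_apply, Matrix.one_apply, hA, Matrix.transpose_apply]
  -- Step 1: expand the square
  have h1 : ∑ i : Fin t, ∑ j : Fin t, ((Gᵀ * G - 1 : Matrix (Fin t) (Fin t) ℝ) i j) ^ 2
      = (∑ i, ∑ j, (A i j) ^ 2) - 2 * (∑ i, A i i) + t := by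
    have hrow : ∀ i : Fin t,
        ∑ j, ((Gᵀ * G - 1 : Matrix (Fin t) (Fin t) ℝ) i j) ^ 2
        = (∑ j, (A i j) ^ 2) - 2 * A i i + 1 := by
      intro i
      have : ∀ j, ((Gᵀ * G - 1 : Matrix (Fin t) (Fin t) ℝ) i j) ^ 2
          = (A i j) ^ 2 - 2 * (if i = j then A i j else 0) + (if i = j then 1 else 0) := by
        intro j
        rw [entry]
        split <;> ring
      simp_rw [this, Finset.sum_add_distrib, Finset.sum_sub_distrib, ← Finset.mul_sum,
        Finset.sum_ite_eq, Finset.mem_univ, if_true]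
    rw [Finset.sum_congr rfl fun i _ => hrow i]
    simp [Finset.sum_add_distrib, Finset.sum_sub_distrib, Finset.mul_sum]
  -- Step 2: ∑ (A i j)^2 = ∑ (B k l)^2
  have h2 : (∑ i, ∑ j, (A i j) ^ 2) = ∑ k, ∑ l, (B k l) ^ 2 := by
    have hAexp : ∀ i j, (A i j) ^ 2
        = ∑ k, ∑ l, (G k i * G l i) * (G k j * G l j) := by
      intro i j
      rw [sq, hA, Finset.sum_mul_sum]
      exact Finset.sum_congr rfl fun k _ => Finset.sum_congr rfl fun l _ => by ring
    have hBexp : ∀ (k l : Fin s), (B k l) ^ 2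
        = ∑ i, ∑ j, (G k i * G l i) * (G k j * G l j) := by
      intro k l
      rw [sq, hB, Finset.sum_mul_sum]
    simp_rw [hAexp, hBexp]
    calc ∑ i : Fin t, ∑ j : Fin t, ∑ k : Fin s, ∑ l : Fin s, (G k i * G l i) * (G k j * G l j)
        = ∑ i : Fin t, ∑ k : Fin s, ∑ j : Fin t, ∑ l : Fin s, (G k i * G l i) * (G k j * G l j) :=
          Finset.sum_congr rfl fun i _ => Finset.sum_comm
      _ = ∑ k : Fin s, ∑ i : Fin t, ∑ j : Fin t, ∑ l : Fin s, (G k i * G l i) * (G k j * G l j) :=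
          Finset.sum_comm
      _ = ∑ k : Fin s, ∑ i : Fin t, ∑ l : Fin s, ∑ j : Fin t, (G k i * G l i) * (G k j * G l j) :=
          Finset.sum_congr rfl fun k _ => Finset.sum_congr rfl fun i _ => Finset.sum_comm
      _ = ∑ k : Fin s, ∑ l : Fin s, ∑ i : Fin t, ∑ j : Fin t, (G k i * G l i) * (G k j * G l j) :=
          Finset.sum_congr rfl fun k _ => Finset.sum_comm
  -- Step 3: trace identity
  have h3 : (∑ i, A i i) = ∑ k, B k k := by
    simp only [hA, hB]
    exact Finset.sum_comm
  -- Step 4: diagonal lower bound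
  have h4 : (∑ k, (B k k) ^ 2) ≤ ∑ k, ∑ l, (B k l) ^ 2 := by
    apply Finset.sum_le_sum
    intro k _
    exact Finset.single_le_sum (fun l _ => sq_nonneg (B k l)) (Finset.mem_univ k)
  -- Step 5: Cauchy–Schwarz
  have h5 : (∑ k, B k k) ^ 2 ≤ (s : ℝ) * ∑ k, (B k k) ^ 2 := by
    have := sq_sum_le_card_mul_sum_sq (s := (Finset.univ : Finset (Fin s))) (f := fun k => B k k)
    simpa using this
  rw [h1, h2, h3]
  have hs' : (0:ℝ) < s := by exact_mod_cast hs
  have hsq : ((∑ k, B k k) - s) ^ 2 ≥ 0 := sq_nonneg _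
  nlinarith [h4, h5, hsq, hs']
end

section
/- Let s ≤ t be positive integers and G ∈ ℝ^{s×t}. Then ‖G^T G − I_t‖_F² = t − s if and only if G G^T = I_s, i.e., if and only if the rows of G are orthonormal. -/
open Matrix

lemma frob_aux {n : ℕ} (N : Matrix (Fin n) (Fin n) ℝ) :
    ∑ i : Fin n, ∑ j : Fin n, ((N - 1) i j) ^ 2
      = Matrix.trace (N * Nᵀ) - 2 * Matrix.trace N + n := by
  have h : ∀ i j : Fin n, ((N - 1) i j)^2
      = N i j * N i j - 2 * (N i j * (1 : Matrix (Fin n) (Fin n) ℝ) i j)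
        + (1 : Matrix (Fin n) (Fin n) ℝ) i j := by
    intro i j
    by_cases hij : i = j <;> simp [Matrix.sub_apply, Matrix.one_apply, hij] <;> ring
  simp only [h]
  simp [Matrix.trace, Matrix.mul_apply, Matrix.diag, Finset.sum_add_distrib,
    Finset.sum_sub_distrib, Matrix.one_apply, Finset.mul_sum, mul_comm]

theorem frobenius_lower_bound_equality_iff {s t : ℕ} (hs : 0 < s) (hst : s ≤ t)
    (G : Matrix (Fin s) (Fin t) ℝ) :
    ∑ i : Fin t, ∑ j : Fin t, ((Gᵀ * G - 1 : Matrix (Fin t) (Fin t) ℝ) i j) ^ 2 = (t : ℝ) - s ↔ G * Gᵀ = 1 := by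
  set A : Matrix (Fin s) (Fin s) ℝ := G * Gᵀ with hA
  have htr1 : Matrix.trace (Gᵀ * G) = Matrix.trace A := Matrix.trace_mul_comm _ _
  have htr2 : Matrix.trace ((Gᵀ * G) * (Gᵀ * G)ᵀ) = Matrix.trace (A * Aᵀ) := by
    rw [hA, Matrix.transpose_mul, Matrix.transpose_transpose, Matrix.transpose_mul,
      Matrix.transpose_transpose]
    calc Matrix.trace (Gᵀ * G * (Gᵀ * G)) = Matrix.trace (Gᵀ * (G * (Gᵀ * G))) := by
          simp only [Matrix.mul_assoc]
      _ = Matrix.trace ((G * (Gᵀ * G)) * Gᵀ) := Matrix.trace_mul_comm _ _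
      _ = Matrix.trace (G * Gᵀ * (G * Gᵀ)) := by simp only [Matrix.mul_assoc]
  have key : ∑ i : Fin t, ∑ j : Fin t, ((Gᵀ * G - 1 : Matrix (Fin t) (Fin t) ℝ) i j) ^ 2
      = (∑ i : Fin s, ∑ j : Fin s, ((A - 1) i j) ^ 2) + ((t : ℝ) - s) := by
    rw [frob_aux, frob_aux, htr1, htr2]; ring
  rw [key]
  constructor
  · intro h
    have hz : ∑ i : Fin s, ∑ j : Fin s, ((A - 1) i j) ^ 2 = 0 := by linarith
    have hall : ∀ i j : Fin s, ((A - 1) i j) ^ 2 = 0 := by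
      intro i j
      have h1 := Finset.sum_eq_zero_iff_of_nonneg
        (fun i _ => Finset.sum_nonneg fun j _ => sq_nonneg ((A - 1) i j)) |>.mp hz i (Finset.mem_univ i)
      exact (Finset.sum_eq_zero_iff_of_nonneg (fun j _ => sq_nonneg _)).mp h1 j (Finset.mem_univ j)
    have hAe : A - 1 = 0 := by
      ext i j
      simpa using pow_eq_zero_iff (n := 2) (by norm_num) |>.mp (hall i j)
    exact sub_eq_zero.mp hAe
  · intro h
    simp [h]
end
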